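/- If an orientation of the edges of the bidirected version of a 3-regular graph G admits an edge coloring with 3 colors such that every vertex has exactly one incoming edge and exactly one outgoing edge of each color, then G admits a proper encoding (defined position-wise by the colors of outgoing edges). -/
import Mathlib


/-- If the arcs of the bidirected version of a finite 3-regular graph `G` can be colored
with 3 colors (`c u v` being the color of the arc `(u,v)`) so that every vertex has exactly
one outgoing and exactly one incoming arc of each color, then `G` admits a proper encoding,
defined position-wise by the colors of the outgoing arcs. -/
theorem coloring_gives_proper_encoding {V : Type*} [Fintype V] [DecidableEq V]
    (G : SimpleGraph V) [DecidableRel G.Adj] (hreg : G.IsRegularOfDegree 3)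
    (c : V → V → Fin 3)
    (hout : ∀ (v : V) (i : Fin 3), ∃! u, G.Adj v u ∧ c v u = i)
    (hin : ∀ (v : V) (i : Fin 3), ∃! u, G.Adj u v ∧ c u v = i) :
    ∃ w : V → Fin 4 → V,
      (∀ v, w v 0 = v) ∧
      (∀ v, ({w v 1, w v 2, w v 3} : Finset V) = G.neighborFinset v) ∧
      (∀ (u : V) (p : Fin 4), ∃! v, w v p = u) ∧
      (∀ v u, G.Adj v u → w v (c v u).succ = u) := by
  choose f hf huniq using hout
  have hadj : ∀ v i, G.Adj v (f v i) := fun v i => (hf v i).1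
  have hcol : ∀ v i, c v (f v i) = i := fun v i => (hf v i).2
  have hfeq : ∀ v u, G.Adj v u → f v (c v u) = u := fun v u h =>
    (huniq v (c v u) u ⟨h, rfl⟩).symm
  refine ⟨fun v => ![v, f v 0, f v 1, f v 2], fun v => rfl, ?_, ?_, ?_⟩
  · intro v
    have hsub : ({f v 0, f v 1, f v 2} : Finset V) ⊆ G.neighborFinset v := by
      intro x hx
      simp only [Finset.mem_insert, Finset.mem_singleton] at hx
      rcases hx with h | h | h <;> subst h <;>
        simpa [SimpleGraph.mem_neighborFinset] using hadj v _
    have hcard : ({f v 0, f v 1, f v 2} : Finset V).card = 3 := by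
      have h01 : f v 0 ≠ f v 1 := fun h => by
        have := (hcol v 0).symm.trans (h ▸ hcol v 1); exact absurd this (by decide)
      have h02 : f v 0 ≠ f v 2 := fun h => by
        have := (hcol v 0).symm.trans (h ▸ hcol v 2); exact absurd this (by decide)
      have h12 : f v 1 ≠ f v 2 := fun h => by
        have := (hcol v 1).symm.trans (h ▸ hcol v 2); exact absurd this (by decide)
      rw [Finset.card_insert_of_notMem (by simp [h01, h02]),
        Finset.card_insert_of_notMem (by simp [h12]), Finset.card_singleton]
    show ({f v 0, f v 1, f v 2} : Finset V) = G.neighborFinset v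
    exact Finset.eq_of_subset_of_card_le hsub (by rw [hcard]; exact le_of_eq (hreg v))
  · intro u p
    fin_cases p
    · exact ⟨u, rfl, fun v hv => hv⟩
    all_goals {
      first
      | (obtain ⟨v, ⟨hv1, hv2⟩, hv3⟩ := hin u 0
         refine ⟨v, ?_, fun v' hv' => hv3 v' ⟨hv' ▸ hadj v' 0, hv' ▸ hcol v' 0⟩⟩
         show f v 0 = u; rw [← hv2]; exact hfeq v u hv1)
      | (obtain ⟨v, ⟨hv1, hv2⟩, hv3⟩ := hin u 1
         refine ⟨v, ?_, fun v' hv' => hv3 v' ⟨hv' ▸ hadj v' 1, hv' ▸ hcol v' 1⟩⟩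
         show f v 1 = u; rw [← hv2]; exact hfeq v u hv1)
      | (obtain ⟨v, ⟨hv1, hv2⟩, hv3⟩ := hin u 2
         refine ⟨v, ?_, fun v' hv' => hv3 v' ⟨hv' ▸ hadj v' 2, hv' ▸ hcol v' 2⟩⟩
         show f v 2 = u; rw [← hv2]; exact hfeq v u hv1)
    }
  · intro v u h
    have key : ∀ i : Fin 3, (![v, f v 0, f v 1, f v 2] : Fin 4 → V) i.succ = f v i := by
      intro i; fin_cases i <;> rfl
    show (![v, f v 0, f v 1, f v 2] : Fin 4 → V) (c v u).succ = u
    rw [key (c v u)]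
    exact hfeq v u h
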